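/- Under the Physarum dynamics, for all t > 0 the discounted time-averaged flow φ̃(t) := (1/(1−e^{−t}))·∫₀ᵗ φ(s)·e^{−(t−s)} ds satisfies Bφ̃(t) = b, the representation σ(t) = (1−e^{−t})·φ̃(t) + e^{−t}·σ(0) holds, and consequently φ̃_e(t) ≥ −σ_e(0)·e^{−t}/(1−e^{−t}) for every arc e ∈ E. -/

import Mathlib

open scoped BigOperators

section PhysarumSetup

variable {V E : Type*} [Fintype V] [Fintype E] [DecidableEq V] [DecidableEq E]

/-- Incidence (boundary) matrix of the digraph given by `tail`/`head`:
`+1` if `i` is the tail of `e`, `-1` if `i` is the head of `e`, `0` otherwise. -/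
def incMatrix (tail head : E → V) : Matrix V E ℝ :=
  Matrix.of fun i e => if tail e = i then (1 : ℝ) else if head e = i then -1 else 0

/-- The digraph has no loops. -/
def NoLoops (tail head : E → V) : Prop := ∀ e, tail e ≠ head e

/-- The digraph has no multiple arcs. -/
def NoMultiple (tail head : E → V) : Prop :=
  ∀ e f, tail e = tail f → head e = head f → e = f

/-- Adjacency in the underlying undirected graph. -/
def Adj (tail head : E → V) (i j : V) : Prop :=
  ∃ e, (tail e = i ∧ head e = j) ∨ (tail e = j ∧ head e = i)

/-- The underlying undirected graph is connected. -/
def IsConnectedGraph (tail head : E → V) : Prop :=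
  ∀ i j : V, Relation.ReflTransGen (Adj tail head) i j

/-- `φ` is a flow with source vector `b`: `Bφ = b`. -/
def IsFlow (tail head : E → V) (b : V → ℝ) (φ : E → ℝ) : Prop :=
  (incMatrix tail head).mulVec φ = b

/-- Net supply `b(S)` of a vertex set `S`. -/
def netSupply (b : V → ℝ) (S : Finset V) : ℝ := ∑ i ∈ S, b i

/-- `b*_max = max_{S ⊆ V} |b(S)|`. -/
noncomputable def bstarMax (b : V → ℝ) : ℝ :=
  sSup {x | ∃ S : Finset V, x = |netSupply b S|}

/-- `b*_min = min { |b(S)| : S ⊆ V, b(S) ≠ 0 }`. -/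
noncomputable def bstarMin (b : V → ℝ) : ℝ :=
  sInf {x | ∃ S : Finset V, netSupply b S ≠ 0 ∧ x = |netSupply b S|}

/-- The support of an arc vector. -/
def suppE (φ : E → ℝ) : Set E := {e | φ e ≠ 0}

/-- An arc set is a forest in the underlying undirected graph:
equivalently, it supports no nonzero circulation. -/
def ForestSupport (tail head : E → V) (s : Set E) : Prop :=
  ∀ γ : E → ℝ, (incMatrix tail head).mulVec γ = 0 → (∀ e, γ e ≠ 0 → e ∈ s) → γ = 0

/-- A basic feasible solution: a positive flow whose support is a forest
in the underlying undirected graph. -/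
def IsBFS (tail head : E → V) (b : V → ℝ) (f : E → ℝ) : Prop :=
  IsFlow tail head b f ∧ (∀ e, 0 ≤ f e) ∧ ForestSupport tail head (suppE f)

/-- A vector is circulation free if its support contains no directed cycle:
equivalently, it supports no nonzero nonnegative circulation. -/
def CirculationFree (tail head : E → V) (φ : E → ℝ) : Prop :=
  ∀ γ : E → ℝ, (incMatrix tail head).mulVec γ = 0 → (∀ e, 0 ≤ γ e) →
    (∀ e, γ e ≠ 0 → φ e ≠ 0) → γ = 0

/-- The weighted graph Laplacian `L(σ) = B · diag(σ/ℓ) · Bᵀ`. -/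
noncomputable def lap (tail head : E → V) (ℓ σ : E → ℝ) : Matrix V V ℝ :=
  incMatrix tail head * Matrix.diagonal (fun e => σ e / ℓ e) * (incMatrix tail head).transpose

/-- The field (slope) of a potential: `Ψ(p)_{ij} = (p_i - p_j)/ℓ_{ij}`. -/
noncomputable def field (tail head : E → V) (ℓ : E → ℝ) (p : V → ℝ) : E → ℝ :=
  fun e => (p (tail e) - p (head e)) / ℓ e

/-- The set of vertices incident to an arc set `H`. -/
def VSet (tail head : E → V) (H : Set E) : Set V :=
  {i | ∃ e ∈ H, tail e = i ∨ head e = i}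

/-- Undirected reachability using only arcs in `H`. -/
def UReach (tail head : E → V) (H : Set E) : V → V → Prop :=
  Relation.ReflTransGen
    (fun i j => ∃ e ∈ H, (tail e = i ∧ head e = j) ∨ (tail e = j ∧ head e = i))

/-- `WalkLen tail head ℓ H i j L`: there is a walk in the underlying undirected
graph of `H` from `i` to `j` of total `ℓ`-length `L`. -/
inductive WalkLen (tail head : E → V) (ℓ : E → ℝ) (H : Set E) : V → V → ℝ → Prop
  | refl (i : V) : WalkLen tail head ℓ H i i 0
  | step {j k : V} {L : ℝ} (i : V) (e : E) (he : e ∈ H)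
      (hik : (tail e = i ∧ head e = j) ∨ (tail e = j ∧ head e = i))
      (hw : WalkLen tail head ℓ H j k L) : WalkLen tail head ℓ H i k (ℓ e + L)

/-- The minimal `ℓ`-length of a connecting walk within `H`. -/
noncomputable def wdist (tail head : E → V) (ℓ : E → ℝ) (H : Set E) (i j : V) : ℝ :=
  sInf {L | WalkLen tail head ℓ H i j L}

/-- The `ℓ`-diameter of `H`: the maximum of `wdist` over pairs of vertices lying in
a common component of `H`. -/
noncomputable def wdiam (tail head : E → V) (ℓ : E → ℝ) (H : Set E) : ℝ :=
  sSup {x | ∃ i j : V, (∃ L, WalkLen tail head ℓ H i j L) ∧ x = wdist tail head ℓ H i j}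

/-- Maximum norm of `p` restricted to a vertex set `A`. -/
noncomputable def supNormOn (A : Set V) (p : V → ℝ) : ℝ := sSup {x | ∃ i ∈ A, x = |p i|}

/-- Maximum norm of an arc vector. -/
noncomputable def eSupNorm (x : E → ℝ) : ℝ := sSup {r | ∃ e : E, r = |x e|}

/-- `min { σ_e : σ_e > 0 }`. -/
noncomputable def minPos (σ : E → ℝ) : ℝ := sInf {x | ∃ e, 0 < σ e ∧ x = σ e}

/-- `min_e ℓ_e`. -/
noncomputable def minLen (ℓ : E → ℝ) : ℝ := sInf {x | ∃ e : E, x = ℓ e}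

/-- The cost `ℓᵀφ` of a flow. -/
def cost (ℓ φ : E → ℝ) : ℝ := ∑ e, ℓ e * φ e

/-- The transshipment problem is feasible: there is a positive flow. -/
def Feasible (tail head : E → V) (b : V → ℝ) : Prop :=
  ∃ φ : E → ℝ, IsFlow tail head b φ ∧ ∀ e, 0 ≤ φ e

/-- `φ` is a minimum-cost positive flow. -/
def IsOptimal (tail head : E → V) (ℓ : E → ℝ) (b : V → ℝ) (φ : E → ℝ) : Prop :=
  IsFlow tail head b φ ∧ (∀ e, 0 ≤ φ e) ∧
    ∀ ψ : E → ℝ, IsFlow tail head b ψ → (∀ e, 0 ≤ ψ e) → cost ℓ φ ≤ cost ℓ ψ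

/-- `Ĥ`: the set of arcs carried by some minimum-cost positive flow. -/
def optSupport (tail head : E → V) (ℓ : E → ℝ) (b : V → ℝ) : Set E :=
  {e | ∃ φ : E → ℝ, IsOptimal tail head ℓ b φ ∧ 0 < φ e}

/-- The current `φ(t) = σ(t)·Ψ(p(t))` of the Physarum solver. -/
noncomputable def current (tail head : E → V) (ℓ : E → ℝ) (σ : ℝ → E → ℝ)
    (p : ℝ → V → ℝ) (t : ℝ) : E → ℝ :=
  fun e => σ t e * field tail head ℓ (p t) e

/-- The Physarum dynamics: `σ(t) > 0` and continuously differentiable on `[0,∞)`,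
`L(σ(t)) p(t) = b`, and `σ' = φ - σ` where `φ(t) = σ(t)·Ψ(p(t))`. -/
structure PhysarumDynamics (tail head : E → V) (ℓ : E → ℝ) (b : V → ℝ)
    (σ : ℝ → E → ℝ) (p : ℝ → V → ℝ) : Prop where
  pos : ∀ t : ℝ, 0 ≤ t → ∀ e, 0 < σ t e
  kirchhoff : ∀ t : ℝ, 0 ≤ t → (lap tail head ℓ (σ t)).mulVec (p t) = b
  contp : ContinuousOn (fun t => p t) (Set.Ici (0 : ℝ))
  dyn : ∀ t ∈ Set.Ici (0 : ℝ), ∀ e : E,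
    HasDerivWithinAt (fun s => σ s e)
      (current tail head ℓ σ p t e - σ t e) (Set.Ici (0 : ℝ)) t

/-- A directed walk from `i` to `j` using the listed arcs in order. -/
inductive DiWalk (tail head : E → V) : V → V → List E → Prop
  | nil (i : V) : DiWalk tail head i i []
  | cons {j k : V} {es : List E} (i : V) (e : E) (h1 : tail e = i) (h2 : head e = j)
      (hw : DiWalk tail head j k es) : DiWalk tail head i k (e :: es)

/-- Discrete `∞`-harmonicity of `p` at node `i` with respect to the arc set `H`:
the maximal in-slope equals the maximal out-slope, and both are nonnegative. -/
noncomputable def InfHarmAt (tail head : E → V) (ℓ : E → ℝ) (H : Set E)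
    (p : V → ℝ) (i : V) : Prop :=
  sSup {r | ∃ e ∈ H, head e = i ∧ r = (p (tail e) - p i) / ℓ e}
    = sSup {r | ∃ e ∈ H, tail e = i ∧ r = (p i - p (head e)) / ℓ e}
  ∧ 0 ≤ sSup {r | ∃ e ∈ H, tail e = i ∧ r = (p i - p (head e)) / ℓ e}

end PhysarumSetup

/-- The discounted time-averaged flow
`φ̃(t) = (1/(1-e^{-t})) ∫₀ᵗ φ(s) e^{-(t-s)} ds`. -/
noncomputable def avgFlow {V E : Type*} [Fintype V] [Fintype E] [DecidableEq V]
    [DecidableEq E] (tail head : E → V) (ℓ : E → ℝ) (σ : ℝ → E → ℝ) (p : ℝ → V → ℝ)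
    (t : ℝ) : E → ℝ :=
  fun e => (1 - Real.exp (-t))⁻¹ *
    ∫ s in (0:ℝ)..t, current tail head ℓ σ p s e * Real.exp (-(t - s))

section AuxPhysarum

variable {V E : Type*} [Fintype V] [Fintype E] [DecidableEq V] [DecidableEq E]

lemma incT_mulVec (tail head : E → V) (hloops : NoLoops tail head) (q : V → ℝ) (e : E) :
    (incMatrix tail head).transpose.mulVec q e = q (tail e) - q (head e) := by
  classical
  simp only [Matrix.mulVec, Matrix.transpose_apply, incMatrix, Matrix.of_apply,
    dotProduct]
  rw [Finset.sum_congr rfl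
    (g := fun i => (if tail e = i then q i else 0) + (if head e = i then -q i else 0))]
  · rw [Finset.sum_add_distrib, Finset.sum_ite_eq, Finset.sum_ite_eq]
    simp [sub_eq_add_neg]
  · intro i _
    by_cases h1 : tail e = i
    · have h2 : head e ≠ i := fun h => hloops e (h1.trans h.symm)
      simp [h1, h2]
    · by_cases h2 : head e = i <;> simp [h1, h2]

lemma current_isFlow (tail head : E → V) (hloops : NoLoops tail head)
    (ℓ : E → ℝ) (hℓ : ∀ e, 0 < ℓ e) (b : V → ℝ) (σ : ℝ → E → ℝ) (p : ℝ → V → ℝ)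
    (hdyn : PhysarumDynamics tail head ℓ b σ p) (s : ℝ) (hs : 0 ≤ s) :
    (incMatrix tail head).mulVec (current tail head ℓ σ p s) = b := by
  have h := hdyn.kirchhoff s hs
  rw [← h]
  unfold lap
  rw [← Matrix.mulVec_mulVec, ← Matrix.mulVec_mulVec]
  have hveq : current tail head ℓ σ p s =
      (Matrix.diagonal fun e => σ s e / ℓ e).mulVec
        ((incMatrix tail head).transpose.mulVec (p s)) := by
    funext e
    rw [Matrix.mulVec_diagonal, incT_mulVec tail head hloops]
    unfold current field
    have := (hℓ e).ne'
    field_simp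
  rw [hveq]

lemma current_contOn (tail head : E → V)
    (ℓ : E → ℝ) (b : V → ℝ) (σ : ℝ → E → ℝ) (p : ℝ → V → ℝ)
    (hdyn : PhysarumDynamics tail head ℓ b σ p) (e : E) :
    ContinuousOn (fun s => current tail head ℓ σ p s e) (Set.Ici (0 : ℝ)) := by
  have hσ : ContinuousOn (fun s => σ s e) (Set.Ici (0 : ℝ)) :=
    fun x hx => (hdyn.dyn x hx e).continuousWithinAt
  have hp : ∀ i : V, ContinuousOn (fun s => p s i) (Set.Ici (0 : ℝ)) :=
    fun i => (continuous_apply i).comp_continuousOn hdyn.contp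
  unfold current field
  exact hσ.mul (((hp (tail e)).sub (hp (head e))).div_const _)

lemma sigma_rep (tail head : E → V)
    (ℓ : E → ℝ) (b : V → ℝ) (σ : ℝ → E → ℝ) (p : ℝ → V → ℝ)
    (hdyn : PhysarumDynamics tail head ℓ b σ p) (t : ℝ) (ht : 0 ≤ t) (e : E) :
    Real.exp t * σ t e - σ 0 e
      = ∫ s in (0:ℝ)..t, Real.exp s * current tail head ℓ σ p s e := by
  have hderiv : ∀ x ∈ Set.Ici (0:ℝ), HasDerivWithinAt (fun s => Real.exp s * σ s e)
      (Real.exp x * current tail head ℓ σ p x e) (Set.Ici (0:ℝ)) x := by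
    intro x hx
    have h1 := (Real.hasDerivAt_exp x).hasDerivWithinAt (s := Set.Ici (0:ℝ))
    have h2 := hdyn.dyn x hx e
    have := h1.mul h2
    exact this.congr_deriv (by ring)
  have hIcc : Set.Icc (0:ℝ) t ⊆ Set.Ici 0 := Set.Icc_subset_Ici_self
  have hcont : ContinuousOn (fun s => Real.exp s * σ s e) (Set.Icc 0 t) :=
    fun x hx => ((hderiv x (hIcc hx)).continuousWithinAt).mono hIcc
  have hcur : ContinuousOn (fun s => Real.exp s * current tail head ℓ σ p s e)
      (Set.Icc 0 t) :=
    (Real.continuous_exp.continuousOn.mul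
      ((current_contOn tail head ℓ b σ p hdyn e).mono hIcc))
  have hint : IntervalIntegrable
      (fun s => Real.exp s * current tail head ℓ σ p s e) MeasureTheory.volume 0 t := by
    apply ContinuousOn.intervalIntegrable
    rwa [Set.uIcc_of_le ht]
  have := intervalIntegral.integral_eq_sub_of_hasDeriv_right_of_le ht hcont
    (fun x hx => (hderiv x (le_of_lt hx.1)).mono (fun y hy => le_of_lt (lt_of_le_of_lt hx.1.le hy)))
    hint
  rw [this]
  simp

end AuxPhysarum

theorem statement_10 {V E : Type*} [Fintype V] [Fintype E] [DecidableEq V] [DecidableEq E]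
    (tail head : E → V)
    (hloops : NoLoops tail head) (hmult : NoMultiple tail head)
    (hconn : IsConnectedGraph tail head)
    (ℓ : E → ℝ) (hℓ : ∀ e, 0 < ℓ e)
    (b : V → ℝ) (hb : ∑ i, b i = 0)
    (σ : ℝ → E → ℝ) (p : ℝ → V → ℝ)
    (hdyn : PhysarumDynamics tail head ℓ b σ p) :
    ∀ t : ℝ, 0 < t →
      IsFlow tail head b (avgFlow tail head ℓ σ p t) ∧
      (∀ e, σ t e = (1 - Real.exp (-t)) * avgFlow tail head ℓ σ p t e +
        Real.exp (-t) * σ 0 e) ∧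
      (∀ e, -(σ 0 e) * Real.exp (-t) / (1 - Real.exp (-t)) ≤
        avgFlow tail head ℓ σ p t e) := by
  intro t ht
  have hE1 : Real.exp (-t) < 1 := Real.exp_lt_one_iff.mpr (by linarith)
  have hE0 : (0:ℝ) < 1 - Real.exp (-t) := by linarith
  have hEne : (1 - Real.exp (-t)) ≠ 0 := hE0.ne'
  -- key integral computation for each edge
  have hexp : ∀ s : ℝ, Real.exp (-(t - s)) = Real.exp (-t) * Real.exp s := by
    intro s
    rw [← Real.exp_add]
    ring_nf
  have hkey : ∀ e, (∫ s in (0:ℝ)..t, current tail head ℓ σ p s e * Real.exp (-(t - s)))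
      = σ t e - Real.exp (-t) * σ 0 e := by
    intro e
    have : ∀ s : ℝ, current tail head ℓ σ p s e * Real.exp (-(t - s))
        = Real.exp (-t) * (Real.exp s * current tail head ℓ σ p s e) := by
      intro s; rw [hexp]; ring
    simp_rw [this]
    rw [intervalIntegral.integral_const_mul,
      ← sigma_rep tail head ℓ b σ p hdyn t ht.le e]
    have h1 : Real.exp (-t) * Real.exp t = 1 := by
      rw [← Real.exp_add]; simp
    rw [mul_sub, ← mul_assoc, h1, one_mul]
  have hrep : ∀ e, σ t e = (1 - Real.exp (-t)) * avgFlow tail head ℓ σ p t e +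
      Real.exp (-t) * σ 0 e := by
    intro e
    unfold avgFlow
    rw [hkey e, ← mul_assoc, mul_inv_cancel₀ hEne, one_mul]
    ring
  refine ⟨?_, hrep, ?_⟩
  · -- flow property
    unfold IsFlow avgFlow
    funext i
    simp only [Matrix.mulVec, dotProduct]
    have step1 : ∀ e, incMatrix tail head i e *
        ((1 - Real.exp (-t))⁻¹ *
          ∫ s in (0:ℝ)..t, current tail head ℓ σ p s e * Real.exp (-(t - s)))
        = (1 - Real.exp (-t))⁻¹ *
          ∫ s in (0:ℝ)..t, incMatrix tail head i e *
            (current tail head ℓ σ p s e * Real.exp (-(t - s))) := by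
      intro e
      rw [intervalIntegral.integral_const_mul]
      ring
    simp_rw [step1]
    rw [← Finset.mul_sum, ← intervalIntegral.integral_finset_sum]
    · have hcongr : Set.EqOn
          (fun s => ∑ e, incMatrix tail head i e *
            (current tail head ℓ σ p s e * Real.exp (-(t - s))))
          (fun s => b i * Real.exp (-(t - s))) (Set.uIcc 0 t) := by
        intro s hs
        rw [Set.uIcc_of_le ht.le] at hs
        have hf := congrFun
          (current_isFlow tail head hloops ℓ hℓ b σ p hdyn s hs.1) i
        simp only [Matrix.mulVec, dotProduct] at hf
        simp only
        calc ∑ e, incMatrix tail head i e *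
              (current tail head ℓ σ p s e * Real.exp (-(t - s)))
            = (∑ e, incMatrix tail head i e * current tail head ℓ σ p s e) *
              Real.exp (-(t - s)) := by
              rw [Finset.sum_mul]; simp_rw [mul_assoc]
          _ = b i * Real.exp (-(t - s)) := by rw [hf]
      rw [intervalIntegral.integral_congr hcongr, intervalIntegral.integral_const_mul]
      have : (∫ s in (0:ℝ)..t, Real.exp (-(t - s))) = 1 - Real.exp (-t) := by
        simp_rw [hexp]
        rw [intervalIntegral.integral_const_mul, integral_exp]
        rw [mul_sub, ← Real.exp_add]
        simp
      rw [this]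
      field_simp
    · intro e _
      apply ContinuousOn.intervalIntegrable
      rw [Set.uIcc_of_le ht.le]
      exact (continuousOn_const.mul
        (((current_contOn tail head ℓ b σ p hdyn e).mono Set.Icc_subset_Ici_self).mul
          ((Real.continuous_exp.comp (by continuity)).continuousOn)))
  · intro e
    have h := hrep e
    have hσpos : 0 < σ t e := hdyn.pos t ht.le e
    rw [div_le_iff₀ hE0]
    nlinarith [hrep e]
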